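/- Let g : ℝⁿ → ℝᵐ be continuous. Define d^tight : T²ⁿ → ℝᵐ componentwise by dᵢ^tight(x, x̂) = min_{z ∈ [x,x̂]} gᵢ(z) if x ≤ x̂, and dᵢ^tight(x, x̂) = max_{z ∈ [x̂,x]} gᵢ(z) if x̂ ≤ x. Then d^tight is a decomposition function for g: d^tight(x, x) = g(x); d^tight(x, y) ≤ d^tight(x̂, y) for x ≤ x̂; and d^tight(x, ŷ) ≤ d^tight(x, y) for y ≤ ŷ (whenever the relevant pairs lie in T²ⁿ). Moreover, (d^tight(x, x̂), d^tight(x̂, x)) equals the minimal inclusion function of g for all x ≤ x̂. -/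

import Mathlib

/-- Membership in `T²ⁿ`: the two vectors are comparable. -/
def Tmem {n : ℕ} (x xh : Fin n → ℝ) : Prop := x ≤ xh ∨ xh ≤ x

/-- The tight decomposition function: for continuous `g`, the map `dt` defined
componentwise by `dtᵢ(x,xh) = min_{z∈[x,xh]} gᵢ z` if `x ≤ xh` and `max_{z∈[xh,x]} gᵢ z` if
`xh ≤ x` is a decomposition function for `g`, and `(dt x xh, dt xh x)` coincides with the
minimal inclusion function of `g` for all `x ≤ xh`. -/
theorem stmt4 {n m : ℕ} (g : (Fin n → ℝ) → (Fin m → ℝ)) (hg : Continuous g)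
    (dt : (Fin n → ℝ) → (Fin n → ℝ) → (Fin m → ℝ))
    (hdef_lo : ∀ x xh : Fin n → ℝ, x ≤ xh →
      dt x xh = fun i => sInf ((fun z => g z i) '' Set.Icc x xh))
    (hdef_hi : ∀ x xh : Fin n → ℝ, xh ≤ x →
      dt x xh = fun i => sSup ((fun z => g z i) '' Set.Icc xh x)) :
    -- (a) agrees with g on the diagonal
    (∀ x : Fin n → ℝ, dt x x = g x) ∧
    -- (b) increasing in the first argument (whenever the relevant pairs lie in T²ⁿ)
    (∀ x xh y : Fin n → ℝ, x ≤ xh → Tmem x y → Tmem xh y → dt x y ≤ dt xh y) ∧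
    -- (c) decreasing in the second argument (whenever the relevant pairs lie in T²ⁿ)
    (∀ x y yh : Fin n → ℝ, y ≤ yh → Tmem x y → Tmem x yh → dt x yh ≤ dt x y) ∧
    -- equality with the minimal inclusion function
    (∀ x xh : Fin n → ℝ, x ≤ xh →
      dt x xh = (fun i => sInf ((fun z => g z i) '' Set.Icc x xh)) ∧
      dt xh x = (fun i => sSup ((fun z => g z i) '' Set.Icc x xh))) := by
  have hgi : ∀ i, Continuous fun z => g z i := fun i => (continuous_apply i).comp hg
  have hbdd_below : ∀ (a b : Fin n → ℝ) (i : Fin m),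
      BddBelow ((fun z => g z i) '' Set.Icc a b) :=
    fun a b i => (isCompact_Icc.image (hgi i)).bddBelow
  have hbdd_above : ∀ (a b : Fin n → ℝ) (i : Fin m),
      BddAbove ((fun z => g z i) '' Set.Icc a b) :=
    fun a b i => (isCompact_Icc.image (hgi i)).bddAbove
  have hne : ∀ (a b : Fin n → ℝ) (i : Fin m), a ≤ b →
      ((fun z => g z i) '' Set.Icc a b).Nonempty :=
    fun a b i hab => (Set.nonempty_Icc.mpr hab).image _
  refine ⟨?_, ?_, ?_, ?_⟩
  · intro x
    rw [hdef_lo x x le_rfl]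
    funext i
    simp [Set.Icc_self]
  · intro x xh y hx hxy hxhy
    rcases hxy with hxy | hyx
    · rcases hxhy with hxhy | hyxh
      · -- x ≤ y, xh ≤ y : both sInf
        rw [hdef_lo x y hxy, hdef_lo xh y hxhy]
        intro i
        exact csInf_le_csInf (hbdd_below x y i) (hne xh y i hxhy)
          (Set.image_mono (Set.Icc_subset_Icc_left hx))
      · -- x ≤ y, y ≤ xh : sInf ≤ g y i ≤ sSup
        rw [hdef_lo x y hxy, hdef_hi xh y hyxh]
        intro i
        calc sInf ((fun z => g z i) '' Set.Icc x y)
            ≤ g y i := csInf_le (hbdd_below x y i)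
              ⟨y, Set.mem_Icc.mpr ⟨hxy, le_rfl⟩, rfl⟩
          _ ≤ sSup ((fun z => g z i) '' Set.Icc y xh) := le_csSup (hbdd_above y xh i)
              ⟨y, Set.mem_Icc.mpr ⟨le_rfl, hyxh⟩, rfl⟩
    · -- y ≤ x ≤ xh : both sSup
      have hyxh : y ≤ xh := le_trans hyx hx
      rw [hdef_hi x y hyx, hdef_hi xh y hyxh]
      intro i
      exact csSup_le_csSup (hbdd_above y xh i) (hne y x i hyx)
        (Set.image_mono (Set.Icc_subset_Icc_right hx))
  · intro x y yh hy hxy hxyh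
    rcases hxy with hxy | hyx
    · -- x ≤ y ≤ yh : both sInf
      have hxyh' : x ≤ yh := le_trans hxy hy
      rw [hdef_lo x y hxy, hdef_lo x yh hxyh']
      intro i
      exact csInf_le_csInf (hbdd_below x yh i) (hne x y i hxy)
        (Set.image_mono (Set.Icc_subset_Icc_right hy))
    · rcases hxyh with hxyh | hyhx
      · -- y ≤ x, x ≤ yh : sInf ≤ g x i ≤ sSup
        rw [hdef_lo x yh hxyh, hdef_hi x y hyx]
        intro i
        calc sInf ((fun z => g z i) '' Set.Icc x yh)
            ≤ g x i := csInf_le (hbdd_below x yh i)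
              ⟨x, Set.mem_Icc.mpr ⟨le_rfl, hxyh⟩, rfl⟩
          _ ≤ sSup ((fun z => g z i) '' Set.Icc y x) := le_csSup (hbdd_above y x i)
              ⟨x, Set.mem_Icc.mpr ⟨hyx, le_rfl⟩, rfl⟩
      · -- yh ≤ x : both sSup
        rw [hdef_hi x yh hyhx, hdef_hi x y hyx]
        intro i
        exact csSup_le_csSup (hbdd_above y x i) (hne yh x i hyhx)
          (Set.image_mono (Set.Icc_subset_Icc_left hy))
  · intro x xh hx
    exact ⟨hdef_lo x xh hx, hdef_hi xh x hx⟩
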